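/- arXiv:1610.02836 — 2 statements merged into one kernel-verified Lean document; each statement's English description precedes it below -/
import Mathlib

section
/- Let V be an n-dimensional real inner product space (n ≥ 3) and A : V × V → ℝ a nonzero symmetric bilinear form with associated self-adjoint operator T (⟪T x, y⟫ = A(x,y)). Define the (0,4)-tensor R(x,y,z,w) := A(x,z) A(y,w) − A(x,w) A(y,z). If the contraction of R over y and w (i.e., ∑ᵢ R(x, eᵢ, z, eᵢ) over an orthonormal basis eᵢ) equals A(x,z), then T ∘ T = (tr T − 1) • T. -/
open RealInnerProductSpace

theorem semi_isotropic_generalized_ricci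
    {V : Type*} [NormedAddCommGroup V] [InnerProductSpace ℝ V] [FiniteDimensional ℝ V]
    (n : ℕ) (hn : 3 ≤ n) (hdim : Module.finrank ℝ V = n)
    (e : OrthonormalBasis (Fin n) ℝ V)
    (A : V → V → ℝ) (hA0 : A ≠ fun _ _ => 0) (hAsym : ∀ x y : V, A x y = A y x)
    (T : V →ₗ[ℝ] V) (hT : ∀ x y : V, ⟪T x, y⟫ = A x y)
    (R : V → V → V → V → ℝ)
    (hR : ∀ x y z w : V, R x y z w = A x z * A y w - A x w * A y z)
    (hcontr : ∀ x z : V, (∑ i, R x (e i) z (e i)) = A x z) :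
    ∀ x : V, T (T x) = (LinearMap.trace ℝ V T - 1) • T x := by
  have htr : LinearMap.trace ℝ V T = ∑ i, A (e i) (e i) := by
    rw [LinearMap.trace_eq_matrix_trace ℝ e.toBasis, Matrix.trace]
    refine Finset.sum_congr rfl fun i _ => ?_
    rw [Matrix.diag_apply, LinearMap.toMatrix_apply, OrthonormalBasis.coe_toBasis,
      OrthonormalBasis.coe_toBasis_repr_apply, OrthonormalBasis.repr_apply_apply,
      real_inner_comm, hT]
  intro x
  apply ext_inner_right ℝ
  intro z
  have key := hcontr x z
  simp only [hR] at key
  rw [Finset.sum_sub_distrib, ← Finset.mul_sum] at key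
  have h2 : ∑ i, A x (e i) * A (e i) z = ⟪T x, T z⟫ := by
    have := OrthonormalBasis.sum_inner_mul_inner e (T x) (T z)
    rw [← this]
    refine Finset.sum_congr rfl fun i _ => ?_
    rw [hT, real_inner_comm (T z) (e i), hT, hAsym z]
  have hTT : ⟪T (T x), z⟫ = ⟪T x, T z⟫ := by
    rw [hT, hAsym, ← hT, real_inner_comm]
  rw [inner_smul_left, RCLike.conj_to_real, hTT, ← h2, hT x z, htr]
  linarith [key]
end

section
/- Let (V, g, R, Ric, Ric₀) be abstract curvature data with n = dim V ≥ 3, and suppose DRic = a • Ric and DRic₀ = a • Ric₀ (Ricci recurrence in a fixed direction with scalar a). Define P(x,y)z := R(x,y)z − (1/(n−1))(Ric(x,z)y − Ric(y,z)x) and H(x,y)z := R(x,y)z − (1/(2(n−1)))(Ric(x,z)y − Ric(y,z)x + g(x,z)Ric₀y − g(y,z)Ric₀x), with DP and DH the corresponding Leibniz expansions using DR, DRic, DRic₀, g. Then DH = a • H if and only if DP = a • P. -/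
open RealInnerProductSpace

theorem mprojective_iff_projective_recurrent
    {V : Type*} [NormedAddCommGroup V] [InnerProductSpace ℝ V] [FiniteDimensional ℝ V]
    (n : ℕ) (hn : 3 ≤ n) (hdim : Module.finrank ℝ V = n)
    (R DR : V → V → V → V)
    (Ric DRic : V → V → ℝ) (Ric₀ DRic₀ : V →ₗ[ℝ] V)
    (hRic : ∀ x y : V, Ric x y = ⟪Ric₀ x, y⟫)
    (hDRic : ∀ x y : V, DRic x y = ⟪DRic₀ x, y⟫)
    (a : ℝ)
    (hRicRec : ∀ x y : V, DRic x y = a * Ric x y)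
    (hRic₀Rec : ∀ x : V, DRic₀ x = a • Ric₀ x)
    (P DP H DH : V → V → V → V)
    (hP : ∀ x y z : V, P x y z =
      R x y z - (1 / ((n : ℝ) - 1)) • (Ric x z • y - Ric y z • x))
    (hDP : ∀ x y z : V, DP x y z =
      DR x y z - (1 / ((n : ℝ) - 1)) • (DRic x z • y - DRic y z • x))
    (hH : ∀ x y z : V, H x y z =
      R x y z - (1 / (2 * ((n : ℝ) - 1))) •
        (Ric x z • y - Ric y z • x + ⟪x, z⟫ • Ric₀ y - ⟪y, z⟫ • Ric₀ x))
    (hDH : ∀ x y z : V, DH x y z =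
      DR x y z - (1 / (2 * ((n : ℝ) - 1))) •
        (DRic x z • y - DRic y z • x + ⟪x, z⟫ • DRic₀ y - ⟪y, z⟫ • DRic₀ x)) :
    (∀ x y z : V, DH x y z = a • H x y z) ↔ (∀ x y z : V, DP x y z = a • P x y z) := by
  have key : ∀ x y z : V,
      (1 / (2 * ((n : ℝ) - 1))) •
        (DRic x z • y - DRic y z • x + ⟪x, z⟫ • DRic₀ y - ⟪y, z⟫ • DRic₀ x)
      = a • ((1 / (2 * ((n : ℝ) - 1))) •
        (Ric x z • y - Ric y z • x + ⟪x, z⟫ • Ric₀ y - ⟪y, z⟫ • Ric₀ x)) := by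
    intro x y z
    rw [hRicRec, hRicRec, hRic₀Rec, hRic₀Rec]
    module
  have key2 : ∀ x y z : V,
      (1 / ((n : ℝ) - 1)) • (DRic x z • y - DRic y z • x)
      = a • ((1 / ((n : ℝ) - 1)) • (Ric x z • y - Ric y z • x)) := by
    intro x y z
    rw [hRicRec, hRicRec]
    module
  have lem : ∀ u v w : V, u - a • w = a • (v - w) → u = a • v := by
    intro u v w h
    have h2 : u = a • (v - w) + a • w := by rw [← h]; abel
    rw [h2, smul_sub]; abel
  constructor <;> intro h x y z
  · have h1 := h x y z
    rw [hDH, hH, key] at h1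
    have h2 := lem _ _ _ h1
    rw [hDP, hP, key2, h2, ← smul_sub]
  · have h1 := h x y z
    rw [hDP, hP, key2] at h1
    have h2 := lem _ _ _ h1
    rw [hDH, hH, key, h2, ← smul_sub]
end
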